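/- Let G be a finite abelian group, X, Y ⊆ G finite nonempty sets with |X| = n, ε ∈ (0, 1/2], and A ⊆ G. If E(X, Y) ≤ |X|²|Y|/K and |σ_A(X, Y)| ≥ ε, then there exist k > ε⁴|Y|K/(4n) and y₁, ..., y_k ∈ Y such that |(X + y_i) ∩ ⋃_{j<i}(X + y_j)| ≤ εn/2 for i = 2, ..., k, and |σ_A(X, {y_j})| ≥ ε/2 for all j = 1, ..., k. -/

import Mathlib

open Finset

/-- The additive energy `E(X, Y)`. -/
def energy {G : Type*} [AddCommGroup G] [DecidableEq G] (X Y : Finset G) : ℕ :=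
  (((X ×ˢ X) ×ˢ Y ×ˢ Y).filter fun q => q.1.1 + q.2.1 = q.1.2 + q.2.2).card

/-- `σ_A(X, Y) = (1/(|X||Y|)) ∑_{x ∈ X} ∑_{y ∈ Y} A(x+y) - 1/2`. -/
noncomputable def sigmaA {G : Type*} [AddCommGroup G] [DecidableEq G]
    (A X Y : Finset G) : ℝ :=
  (∑ x ∈ X, ∑ y ∈ Y, (if x + y ∈ A then (1 : ℝ) else 0)) / ((X.card : ℝ) * Y.card) - 1 / 2

section Aux

variable {G : Type*} [AddCommGroup G] [DecidableEq G]

lemma sum_ite_eq_aux (X : Finset G) (u y2 : G) :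
    ∑ x2 ∈ X, (if u = x2 + y2 then (1:ℕ) else 0) = if u - y2 ∈ X then 1 else 0 := by
  refine (Finset.sum_congr rfl fun x2 _ => ?_).trans (Finset.sum_ite_eq' X (u - y2) fun _ => 1)
  congr 1
  simp [eq_sub_iff_add_eq, eq_comm]

lemma sum_ite_eq_aux' (X : Finset G) (u y2 : G) :
    ∑ x2 ∈ X, (if x2 + y2 = u then (1:ℕ) else 0) = if u - y2 ∈ X then 1 else 0 := by
  refine (Finset.sum_congr rfl fun x2 _ => ?_).trans (sum_ite_eq_aux X u y2)
  congr 1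
  simp [eq_comm]

lemma image_add_inter_eq (X s : Finset G) (y0 : G) :
    ((X.image (· + y0)) ∩ s) = s.filter (fun u => u - y0 ∈ X) := by
  ext u
  simp only [Finset.mem_inter, Finset.mem_image, Finset.mem_filter, ← eq_sub_iff_add_eq,
    exists_eq_right]
  tauto

lemma energy_eq_sum_sq (X Y : Finset G) :
    energy X Y = ∑ u ∈ (X ×ˢ Y).image (fun p => p.1 + p.2),
      (∑ y0 ∈ Y, if u - y0 ∈ X then 1 else 0) ^ 2 := by
  have hr : ∀ u : G, (∑ x2 ∈ X, ∑ y2 ∈ Y, if u = x2 + y2 then (1:ℕ) else 0)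
      = ∑ y0 ∈ Y, if u - y0 ∈ X then 1 else 0 := by
    intro u
    rw [Finset.sum_comm]
    exact Finset.sum_congr rfl fun y2 _ => sum_ite_eq_aux X u y2
  have step1 : energy X Y = ∑ x1 ∈ X, ∑ y1 ∈ Y, ∑ y0 ∈ Y, if x1 + y1 - y0 ∈ X then 1 else 0 := by
    rw [energy, Finset.card_filter, Finset.sum_product, Finset.sum_product]
    refine Finset.sum_congr rfl fun x1 _ => ?_
    have h2 : ∀ x2 : G, (∑ y ∈ Y ×ˢ Y, if x1 + y.1 = x2 + y.2 then (1:ℕ) else 0)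
        = ∑ y1 ∈ Y, ∑ y2 ∈ Y, if x1 + y1 = x2 + y2 then (1:ℕ) else 0 := fun x2 =>
      Finset.sum_product ..
    rw [Finset.sum_congr rfl fun x2 _ => h2 x2, Finset.sum_comm]
    exact Finset.sum_congr rfl fun y1 _ => hr (x1 + y1)
  have step2 : (∑ x1 ∈ X, ∑ y1 ∈ Y, ∑ y0 ∈ Y, if x1 + y1 - y0 ∈ X then (1:ℕ) else 0)
      = ∑ p ∈ X ×ˢ Y, ∑ y0 ∈ Y, if p.1 + p.2 - y0 ∈ X then 1 else 0 :=
    (Finset.sum_product X Y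
      (fun p : G × G => ∑ y0 ∈ Y, if p.1 + p.2 - y0 ∈ X then (1:ℕ) else 0)).symm
  have hfib : ∀ u : G, ((X ×ˢ Y).filter fun p => p.1 + p.2 = u).card
      = ∑ y0 ∈ Y, if u - y0 ∈ X then 1 else 0 := by
    intro u
    rw [Finset.card_filter, Finset.sum_product, Finset.sum_comm]
    exact Finset.sum_congr rfl fun y2 _ => sum_ite_eq_aux' X u y2
  have hcomp := Finset.sum_fiberwise_of_maps_to
    (s := X ×ˢ Y) (t := (X ×ˢ Y).image (fun p => p.1 + p.2)) (g := fun p => p.1 + p.2)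
    (fun p hp => Finset.mem_image_of_mem _ hp)
    (fun p : G × G => ∑ y0 ∈ Y, if p.1 + p.2 - y0 ∈ X then (1:ℕ) else 0)
  rw [step1, step2, ← hcomp]
  refine Finset.sum_congr rfl fun u hu => ?_
  rw [Finset.sum_congr rfl (fun p hp => by
        rw [show p.1 + p.2 = u from (Finset.mem_filter.1 hp).2]),
      Finset.sum_const, smul_eq_mul, ← hfib u, sq]

lemma biUnion_snoc_lt_last {α β : Type*} [DecidableEq β] {m : ℕ} (y : Fin m → α) (z : α)
    (f : α → Finset β) :
    ((Finset.univ.filter fun j : Fin (m+1) => j < Fin.last m).biUnion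
        fun j => f ((Fin.snoc y z : Fin (m+1) → α) j)) =
      Finset.univ.biUnion fun j : Fin m => f (y j) := by
  ext u
  simp only [mem_biUnion, mem_filter, mem_univ, true_and]
  constructor
  · rintro ⟨j, hj, hu⟩
    have hjm : (j : ℕ) < m := by simpa [Fin.lt_def] using hj
    have hcast : (⟨(j : ℕ), hjm⟩ : Fin m).castSucc = j := by ext; rfl
    rw [← hcast, Fin.snoc_castSucc] at hu
    exact ⟨_, hu⟩
  · rintro ⟨j, hu⟩
    exact ⟨j.castSucc, Fin.castSucc_lt_last j, by rwa [Fin.snoc_castSucc]⟩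

lemma biUnion_snoc_lt_castSucc {α β : Type*} [DecidableEq β] {m : ℕ} (y : Fin m → α) (z : α)
    (i0 : Fin m) (f : α → Finset β) :
    ((Finset.univ.filter fun j : Fin (m+1) => j < i0.castSucc).biUnion
        fun j => f ((Fin.snoc y z : Fin (m+1) → α) j)) =
      (Finset.univ.filter fun j : Fin m => j < i0).biUnion fun j => f (y j) := by
  ext u
  simp only [mem_biUnion, mem_filter, mem_univ, true_and]
  constructor
  · rintro ⟨j, hj, hu⟩
    have hji : (j : ℕ) < (i0 : ℕ) := by simpa [Fin.lt_def] using hj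
    have hjm : (j : ℕ) < m := hji.trans i0.isLt
    have hcast : (⟨(j : ℕ), hjm⟩ : Fin m).castSucc = j := by ext; rfl
    rw [← hcast, Fin.snoc_castSucc] at hu
    exact ⟨⟨(j : ℕ), hjm⟩, by simpa [Fin.lt_def] using hji, hu⟩
  · rintro ⟨j, hj, hu⟩
    exact ⟨j.castSucc, Fin.castSucc_lt_castSucc_iff.2 hj, by rwa [Fin.snoc_castSucc]⟩

lemma greedy (X Y' : Finset G) (n : ℕ) (hn : X.card = n) (hn0 : 0 < n)
    (ε : ℝ) (hε : 0 < ε) (hε' : ε ≤ 1 / 2) :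
    ∃ (k : ℕ) (y : Fin k → G), (∀ i, y i ∈ Y') ∧
      (∀ i : Fin k, 0 < (i : ℕ) →
        ((((X.image (· + y i)) ∩
            (Finset.univ.filter fun j : Fin k => j < i).biUnion
              fun j => X.image (· + y j)).card : ℝ) ≤ ε * n / 2)) ∧
      (∀ z ∈ Y', ε * n / 2 <
        (((X.image (· + z)) ∩
            Finset.univ.biUnion fun j : Fin k => X.image (· + y j)).card : ℝ)) := by
  have hcard_im : ∀ w : G, (X.image (· + w)).card = n := fun w => by
    rw [Finset.card_image_of_injective _ (add_left_injective w), hn]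
  have hεn : ε * n / 2 < n := by
    have h1 : (1 : ℝ) ≤ n := by exact_mod_cast hn0
    nlinarith
  have key : ∀ m : ℕ,
      (∃ (k : ℕ) (y : Fin k → G), (∀ i, y i ∈ Y') ∧
        (∀ i : Fin k, 0 < (i : ℕ) →
          ((((X.image (· + y i)) ∩
              (Finset.univ.filter fun j : Fin k => j < i).biUnion
                fun j => X.image (· + y j)).card : ℝ) ≤ ε * n / 2)) ∧
        (∀ z ∈ Y', ε * n / 2 <
          (((X.image (· + z)) ∩
              Finset.univ.biUnion fun j : Fin k => X.image (· + y j)).card : ℝ))) ∨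
      (∃ y : Fin m → G, Function.Injective y ∧ (∀ i, y i ∈ Y') ∧
        (∀ i : Fin m, 0 < (i : ℕ) →
          ((((X.image (· + y i)) ∩
              (Finset.univ.filter fun j : Fin m => j < i).biUnion
                fun j => X.image (· + y j)).card : ℝ) ≤ ε * n / 2))) := by
    intro m
    induction m with
    | zero =>
      right
      exact ⟨Fin.elim0, fun a => a.elim0, fun i => i.elim0, fun i => i.elim0⟩
    | succ m ih =>
      rcases ih with h | ⟨y, hinj, hmem, hspread⟩
      · exact Or.inl h
      by_cases hst : ∀ z ∈ Y', ε * n / 2 <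
          (((X.image (· + z)) ∩
              Finset.univ.biUnion fun j : Fin m => X.image (· + y j)).card : ℝ)
      · exact Or.inl ⟨m, y, hmem, hspread, hst⟩
      push_neg at hst
      obtain ⟨z, hzY, hz⟩ := hst
      have hznotin : ∀ j : Fin m, y j ≠ z := by
        intro j hjz
        have hsub : X.image (· + z) ⊆
            Finset.univ.biUnion fun j : Fin m => X.image (· + y j) := by
          rw [← hjz]
          exact Finset.subset_biUnion_of_mem (fun j : Fin m => X.image (· + y j))
            (Finset.mem_univ j)
        rw [Finset.inter_eq_left.mpr hsub, hcard_im z] at hz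
        linarith
      right
      refine ⟨(Fin.snoc y z : Fin (m+1) → G), ?_, ?_, ?_⟩
      · intro a b hab
        induction a using Fin.lastCases with
        | last =>
          induction b using Fin.lastCases with
          | last => rfl
          | cast b0 =>
            rw [Fin.snoc_last, Fin.snoc_castSucc] at hab
            exact ((hznotin b0) hab.symm).elim
        | cast a0 =>
          induction b using Fin.lastCases with
          | last =>
            rw [Fin.snoc_last, Fin.snoc_castSucc] at hab
            exact ((hznotin a0) hab).elim
          | cast b0 =>
            rw [Fin.snoc_castSucc, Fin.snoc_castSucc] at hab
            rw [hinj hab]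
      · intro i
        induction i using Fin.lastCases with
        | last => rw [Fin.snoc_last]; exact hzY
        | cast i0 => rw [Fin.snoc_castSucc]; exact hmem i0
      · intro i
        induction i using Fin.lastCases with
        | last =>
          intro _
          rw [Fin.snoc_last, biUnion_snoc_lt_last y z (fun w => X.image (· + w))]
          exact hz
        | cast i0 =>
          intro hi
          rw [Fin.snoc_castSucc, biUnion_snoc_lt_castSucc y z i0 (fun w => X.image (· + w))]
          exact hspread i0 (by simpa using hi)
  rcases key (Y'.card + 1) with h | ⟨y, hinj, hmem, _⟩
  · exact h
  · exfalso
    have hle : (Finset.univ : Finset (Fin (Y'.card + 1))).card ≤ Y'.card :=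
      Finset.card_le_card_of_injOn y (fun i _ => hmem i) hinj.injOn
    simp at hle

lemma sigmaA_singleton (A X : Finset G) (y0 : G) :
    sigmaA A X {y0} = (∑ x ∈ X, if x + y0 ∈ A then (1 : ℝ) else 0) / X.card - 1 / 2 := by
  rw [sigmaA]
  congr 1
  rw [Finset.card_singleton, Nat.cast_one, mul_one]
  congr 1
  exact Finset.sum_congr rfl fun x _ => Finset.sum_singleton _ _

lemma abs_sigmaA_singleton_le (A X : Finset G) (hX : X.Nonempty) (y0 : G) :
    |sigmaA A X {y0}| ≤ 1 / 2 := by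
  have hc : (0 : ℝ) < X.card := by exact_mod_cast Finset.card_pos.2 hX
  set S := ∑ x ∈ X, if x + y0 ∈ A then (1 : ℝ) else 0 with hS
  have h0 : 0 ≤ S := Finset.sum_nonneg fun x _ => by positivity
  have h1 : S ≤ X.card := by
    rw [hS]
    calc ∑ x ∈ X, (if x + y0 ∈ A then (1:ℝ) else 0) ≤ ∑ x ∈ X, 1 :=
          Finset.sum_le_sum fun x _ => by split <;> norm_num
      _ = X.card := by simp
  rw [sigmaA_singleton, abs_le]
  constructor
  · have : 0 ≤ S / X.card := div_nonneg h0 hc.le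
    linarith
  · have : S / X.card ≤ 1 := (div_le_one hc).2 h1
    linarith

lemma sigmaA_avg (A X Y : Finset G) (hX : X.Nonempty) (hY : Y.Nonempty) :
    sigmaA A X Y * Y.card = ∑ y0 ∈ Y, sigmaA A X {y0} := by
  have hXc : (X.card : ℝ) ≠ 0 := by
    have := Finset.card_pos.2 hX
    positivity
  have hYc : (Y.card : ℝ) ≠ 0 := by
    have := Finset.card_pos.2 hY
    positivity
  have hswap : ∑ y0 ∈ Y, ∑ x ∈ X, (if x + y0 ∈ A then (1:ℝ) else 0)
      = ∑ x ∈ X, ∑ y0 ∈ Y, (if x + y0 ∈ A then (1:ℝ) else 0) := Finset.sum_comm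
  simp_rw [sigmaA_singleton, sigmaA]
  rw [Finset.sum_sub_distrib, ← Finset.sum_div, hswap, Finset.sum_const, nsmul_eq_mul]
  field_simp

end Aux

set_option maxHeartbeats 1000000 in
theorem exists_spread_translates_with_deviation {G : Type*} [AddCommGroup G] [DecidableEq G]
    (A X Y : Finset G) (hX : X.Nonempty) (hY : Y.Nonempty) (n : ℕ) (hn : X.card = n)
    (ε K : ℝ) (hε : 0 < ε) (hε' : ε ≤ 1 / 2) (hK : 0 < K)
    (hE : (energy X Y : ℝ) ≤ (X.card : ℝ) ^ 2 * Y.card / K)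
    (hσ : ε ≤ |sigmaA A X Y|) :
    ∃ k : ℕ, ε ^ 4 * Y.card * K / (4 * n) < (k : ℝ) ∧
      ∃ y : Fin k → G, (∀ i, y i ∈ Y) ∧
        (∀ i : Fin k, 0 < (i : ℕ) →
          ((((X.image (· + y i)) ∩
              (Finset.univ.filter fun j : Fin k => j < i).biUnion
                fun j => X.image (· + y j)).card : ℝ) ≤ ε * n / 2)) ∧
        ∀ j : Fin k, ε / 2 ≤ |sigmaA A X {y j}| := by
  classical
  have hn0 : 0 < n := hn ▸ Finset.card_pos.2 hX
  have hnR : (0:ℝ) < n := by exact_mod_cast hn0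
  have hYc : (0:ℝ) < Y.card := by exact_mod_cast Finset.card_pos.2 hY
  -- the set of good translates
  set Y' : Finset G := Y.filter (fun y0 => ε / 2 ≤ |sigmaA A X {y0}|) with hY'def
  have habs : ε * Y.card ≤ ∑ y0 ∈ Y, |sigmaA A X {y0}| := by
    calc ε * Y.card ≤ |sigmaA A X Y| * Y.card :=
          mul_le_mul_of_nonneg_right hσ hYc.le
      _ = |sigmaA A X Y * Y.card| := by
          rw [abs_mul, abs_of_nonneg hYc.le]
      _ = |∑ y0 ∈ Y, sigmaA A X {y0}| := by rw [sigmaA_avg A X Y hX hY]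
      _ ≤ ∑ y0 ∈ Y, |sigmaA A X {y0}| := Finset.abs_sum_le_sum_abs _ _
  have hsplit := Finset.sum_filter_add_sum_filter_not Y
      (fun y0 => ε / 2 ≤ |sigmaA A X {y0}|) (fun y0 => |sigmaA A X {y0}|)
  have h1 : ∑ y0 ∈ Y.filter (fun y0 => ε / 2 ≤ |sigmaA A X {y0}|), |sigmaA A X {y0}|
      ≤ (Y'.card : ℝ) * (1/2) := by
    calc ∑ y0 ∈ Y.filter (fun y0 => ε / 2 ≤ |sigmaA A X {y0}|), |sigmaA A X {y0}|
        ≤ Y'.card • (1/2 : ℝ) :=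
          Finset.sum_le_card_nsmul _ _ _ (fun y0 _ => abs_sigmaA_singleton_le A X hX y0)
      _ = (Y'.card : ℝ) * (1/2) := by rw [nsmul_eq_mul]
  have h2 : ∑ y0 ∈ Y.filter (fun y0 => ¬ (ε / 2 ≤ |sigmaA A X {y0}|)), |sigmaA A X {y0}|
      ≤ (Y.card : ℝ) * (ε/2) := by
    calc ∑ y0 ∈ Y.filter (fun y0 => ¬ (ε / 2 ≤ |sigmaA A X {y0}|)), |sigmaA A X {y0}|
        ≤ (Y.filter (fun y0 => ¬ (ε / 2 ≤ |sigmaA A X {y0}|))).card • (ε/2 : ℝ) :=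
          Finset.sum_le_card_nsmul _ _ _
            (fun y0 hy0 => le_of_lt (lt_of_not_ge (Finset.mem_filter.1 hy0).2))
      _ = ((Y.filter (fun y0 => ¬ (ε / 2 ≤ |sigmaA A X {y0}|))).card : ℝ) * (ε/2) := by
          rw [nsmul_eq_mul]
      _ ≤ (Y.card : ℝ) * (ε/2) := by
          have hcle : ((Y.filter (fun y0 => ¬ (ε / 2 ≤ |sigmaA A X {y0}|))).card : ℝ)
              ≤ Y.card := by exact_mod_cast Finset.card_filter_le _ _
          have : (0:ℝ) ≤ ε/2 := by positivity
          exact mul_le_mul_of_nonneg_right hcle this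
  have hY'card : ε * Y.card ≤ (Y'.card : ℝ) := by
    have := habs
    rw [← hsplit] at this
    linarith
  have hY'pos : (0:ℝ) < Y'.card := lt_of_lt_of_le (by positivity) hY'card
  have hY'ne : Y'.Nonempty := Finset.card_pos.1 (by exact_mod_cast hY'pos)
  obtain ⟨k, y, hmem, hspread, hstuck⟩ := greedy X Y' n hn hn0 ε hε hε'
  refine ⟨k, ?_, y, fun i => Finset.mem_of_mem_filter _ (hmem i), hspread,
    fun j => (Finset.mem_filter.1 (hmem j)).2⟩
  -- the union of the chosen translates
  set U := Finset.univ.biUnion fun j : Fin k => X.image (· + y j) with hU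
  have hint : ∀ y0 : G, (((X.image (· + y0)) ∩ U).card : ℝ)
      = ∑ u ∈ U, (if u - y0 ∈ X then (1:ℝ) else 0) := by
    intro y0
    rw [image_add_inter_eq X U y0, Finset.card_filter]
    push_cast
    exact Finset.sum_congr rfl fun u _ => by split <;> norm_num
  have hswapsum : ∑ u ∈ U, ((∑ y0 ∈ Y, if u - y0 ∈ X then (1:ℕ) else 0 : ℕ) : ℝ)
      = ∑ y0 ∈ Y, (((X.image (· + y0)) ∩ U).card : ℝ) := by
    simp_rw [hint]
    push_cast
    rw [Finset.sum_comm]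
  have hA2 : ε^2 * Y.card * n / 2
      < ∑ u ∈ U, ((∑ y0 ∈ Y, if u - y0 ∈ X then (1:ℕ) else 0 : ℕ) : ℝ) := by
    have hlt : (Y'.card : ℝ) * (ε * n / 2)
        < ∑ y0 ∈ Y', (((X.image (· + y0)) ∩ U).card : ℝ) := by
      have h := Finset.sum_lt_sum_of_nonempty hY'ne (fun y0 hy0 => hstuck y0 hy0)
      simpa [Finset.sum_const, nsmul_eq_mul] using h
    have hsub2 : ∑ y0 ∈ Y', (((X.image (· + y0)) ∩ U).card : ℝ)
        ≤ ∑ y0 ∈ Y, (((X.image (· + y0)) ∩ U).card : ℝ) := by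
      rw [hY'def]
      exact Finset.sum_le_sum_of_subset_of_nonneg (Finset.filter_subset _ _)
        (fun _ _ _ => by positivity)
    have hmul : ε^2 * Y.card * n / 2 ≤ (Y'.card : ℝ) * (ε * n / 2) := by
      have h := mul_le_mul_of_nonneg_right hY'card (show (0:ℝ) ≤ ε * n / 2 by positivity)
      nlinarith
    rw [hswapsum]
    linarith
  have hCS : (∑ u ∈ U, ((∑ y0 ∈ Y, if u - y0 ∈ X then (1:ℕ) else 0 : ℕ) : ℝ))^2
      ≤ (U.card : ℝ) * ∑ u ∈ U, ((∑ y0 ∈ Y, if u - y0 ∈ X then (1:ℕ) else 0 : ℕ) : ℝ)^2 := by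
    have h := Finset.sum_mul_sq_le_sq_mul_sq U (fun _ => (1:ℝ))
      (fun u => ((∑ y0 ∈ Y, if u - y0 ∈ X then (1:ℕ) else 0 : ℕ) : ℝ))
    simpa [one_mul, one_pow, Finset.sum_const, nsmul_eq_mul, mul_comm] using h
  have hUsub : U ⊆ (X ×ˢ Y).image (fun p => p.1 + p.2) := by
    intro u hu
    rw [hU] at hu
    obtain ⟨j, -, hu⟩ := Finset.mem_biUnion.1 hu
    obtain ⟨x, hx, rfl⟩ := Finset.mem_image.1 hu
    exact Finset.mem_image.2 ⟨(x, y j),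
      Finset.mem_product.2 ⟨hx, Finset.mem_of_mem_filter _ (hmem j)⟩, rfl⟩
  have hBE : ∑ u ∈ U, ((∑ y0 ∈ Y, if u - y0 ∈ X then (1:ℕ) else 0 : ℕ) : ℝ)^2
      ≤ (energy X Y : ℝ) := by
    have hcast : (energy X Y : ℝ) = ∑ u ∈ (X ×ˢ Y).image (fun p => p.1 + p.2),
        ((∑ y0 ∈ Y, if u - y0 ∈ X then (1:ℕ) else 0 : ℕ) : ℝ)^2 := by
      rw [energy_eq_sum_sq X Y]
      push_cast
      rfl
    rw [hcast]
    exact Finset.sum_le_sum_of_subset_of_nonneg hUsub (fun _ _ _ => by positivity)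
  have hUk : (U.card : ℝ) ≤ (k : ℝ) * n := by
    have h1' : U.card ≤ ∑ j : Fin k, (X.image (· + y j)).card := Finset.card_biUnion_le
    have h2' : ∀ j : Fin k, (X.image (· + y j)).card = n := fun j => by
      rw [Finset.card_image_of_injective _ (add_left_injective _), hn]
    calc (U.card:ℝ) ≤ ∑ j : Fin k, ((X.image (· + y j)).card : ℝ) := by exact_mod_cast h1'
      _ = ∑ _j : Fin k, (n:ℝ) := Finset.sum_congr rfl fun j _ => by rw [h2' j]
      _ = (k : ℝ) * n := by
          rw [Finset.sum_const, Finset.card_univ, Fintype.card_fin, nsmul_eq_mul]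
  have hE' : (energy X Y : ℝ) * K ≤ (n:ℝ)^2 * Y.card := by
    rw [hn] at hE
    exact (le_div_iff₀ hK).1 hE
  have hB0 : (0:ℝ) ≤ ∑ u ∈ U, ((∑ y0 ∈ Y, if u - y0 ∈ X then (1:ℕ) else 0 : ℕ) : ℝ)^2 :=
    Finset.sum_nonneg fun _ _ => by positivity
  have hchain : (ε^2 * Y.card * n / 2)^2 < ((k:ℝ) * n) * (energy X Y : ℝ) := by
    have h0 : (0:ℝ) ≤ ε^2 * Y.card * n / 2 := by positivity
    have hsq : (ε^2 * Y.card * n / 2)^2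
        < (∑ u ∈ U, ((∑ y0 ∈ Y, if u - y0 ∈ X then (1:ℕ) else 0 : ℕ) : ℝ))^2 := by
      nlinarith [hA2]
    have hkn0 : (0:ℝ) ≤ (k:ℝ) * n := by positivity
    calc (ε^2 * Y.card * n / 2)^2
        < (∑ u ∈ U, ((∑ y0 ∈ Y, if u - y0 ∈ X then (1:ℕ) else 0 : ℕ) : ℝ))^2 := hsq
      _ ≤ (U.card : ℝ) * ∑ u ∈ U, ((∑ y0 ∈ Y, if u - y0 ∈ X then (1:ℕ) else 0 : ℕ) : ℝ)^2 := hCS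
      _ ≤ ((k:ℝ) * n) * ∑ u ∈ U, ((∑ y0 ∈ Y, if u - y0 ∈ X then (1:ℕ) else 0 : ℕ) : ℝ)^2 :=
          mul_le_mul_of_nonneg_right hUk hB0
      _ ≤ ((k:ℝ) * n) * (energy X Y : ℝ) := mul_le_mul_of_nonneg_left hBE hkn0
  have Hc : (ε^2 * Y.card * n / 2)^2 * K < ((k:ℝ) * n) * ((n:ℝ)^2 * Y.card) := by
    calc (ε^2 * Y.card * n / 2)^2 * K
        < ((k:ℝ) * n) * (energy X Y : ℝ) * K := mul_lt_mul_of_pos_right hchain hK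
      _ = ((k:ℝ) * n) * ((energy X Y : ℝ) * K) := by ring
      _ ≤ ((k:ℝ) * n) * ((n:ℝ)^2 * Y.card) :=
          mul_le_mul_of_nonneg_left hE' (by positivity)
  rw [div_lt_iff₀ (by positivity : (0:ℝ) < 4 * n)]
  have hfin : ε^4 * (Y.card:ℝ) * K * ((n:ℝ)^2 * Y.card / 4)
      < ((k:ℝ) * (4 * n)) * ((n:ℝ)^2 * Y.card / 4) := by
    calc ε^4 * (Y.card:ℝ) * K * ((n:ℝ)^2 * Y.card / 4)
        = (ε^2 * Y.card * n / 2)^2 * K := by ring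
      _ < ((k:ℝ) * n) * ((n:ℝ)^2 * Y.card) := Hc
      _ = ((k:ℝ) * (4 * n)) * ((n:ℝ)^2 * Y.card / 4) := by ring
  exact lt_of_mul_lt_mul_right hfin (by positivity)
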